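/- Let C be a nonempty closed convex subset of a locally convex Hausdorff topological vector space and u ∈ X. Then u ∈ 0⁺C (i.e., y + ku ∈ C for all y ∈ C and k ≥ 0) if and only if y + u ∈ C for all y ∈ C. -/

import Mathlib

/-- For a nonempty closed convex set `C` in a locally convex Hausdorff topological
vector space, `u` belongs to the recession cone of `C` if and only if
`y + u ∈ C` for every `y ∈ C`. -/
theorem mem_recessionCone_iff {X : Type*} [AddCommGroup X] [Module ℝ X]
    [TopologicalSpace X] [IsTopologicalAddGroup X] [ContinuousSMul ℝ X]
    [LocallyConvexSpace ℝ X] [T2Space X]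
    (C : Set X) (hne : C.Nonempty) (hclosed : IsClosed C) (hconv : Convex ℝ C)
    (u : X) :
    (∀ y ∈ C, ∀ k : ℝ, 0 ≤ k → y + k • u ∈ C) ↔ (∀ y ∈ C, y + u ∈ C) := by
  constructor
  · intro h y hy
    simpa using h y hy 1 zero_le_one
  · intro h y hy k hk
    -- first, y + n • u ∈ C for all naturals n
    have hnat : ∀ n : ℕ, y + (n : ℝ) • u ∈ C := by
      intro n
      induction n with
      | zero => simpa using hy
      | succ n ih =>
        have := h _ ih
        push_cast
        rw [add_smul, one_smul, ← add_assoc]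
        exact this
    rcases eq_or_lt_of_le hk with rfl | hk'
    · simpa using hy
    · set n : ℕ := ⌈k⌉₊ with hn
      have hkn : k ≤ (n : ℝ) := Nat.le_ceil k
      have hnpos : (0 : ℝ) < n := lt_of_lt_of_le hk' hkn
      set t : ℝ := k / n with ht
      have ht0 : 0 ≤ t := div_nonneg hk (le_of_lt hnpos)
      have ht1 : t ≤ 1 := (div_le_one hnpos).mpr hkn
      have := hconv hy (hnat n) (by linarith : (0:ℝ) ≤ 1 - t) ht0 (by ring)
      have htn : t * (n : ℝ) = k := div_mul_cancel₀ k (ne_of_gt hnpos)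
      have : (1 - t) • y + t • (y + (n : ℝ) • u) = y + k • u := by
        rw [smul_add, smul_smul, htn]
        module
      rw [← this]
      exact hconv hy (hnat n) (by linarith) ht0 (by ring)
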